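/- Suppose 1 < α < 2 and f ∈ C^α[0,1], i.e., f is differentiable with |f'(x) − f'(y)| ≤ L|x − y|^{α−1} for all x, y ∈ [0,1]. Let g be the convex minorant of f on [0,1] (the lower boundary of the convex hull of the epigraph of f). Then g is differentiable and g' satisfies |g'(x) − g'(y)| ≤ L|x − y|^{α−1} for all x, y ∈ [0,1]; in particular g ∈ C^α[0,1]. -/

import Mathlib

open Set

namespace CMH

noncomputable section

def epi (f : ℝ → ℝ) : Set (ℝ × ℝ) := {p : ℝ × ℝ | p.1 ∈ Icc (0:ℝ) 1 ∧ f p.1 ≤ p.2}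

def fib (f : ℝ → ℝ) (x : ℝ) : Set ℝ :=
  {y : ℝ | ((x, y) : ℝ × ℝ) ∈ convexHull ℝ (epi f)}

def IsChord (f g : ℝ → ℝ) (u v : ℝ) : Prop :=
  0 ≤ u ∧ u < v ∧ v ≤ 1 ∧
  (∀ t ∈ Icc u v, g t = f u + (f v - f u) / (v - u) * (t - u)) ∧
  (∀ t ∈ Icc (0:ℝ) 1, f u + (f v - f u) / (v - u) * (t - u) ≤ f t)

theorem IsChord.gu {f g : ℝ → ℝ} {u v : ℝ} (h : IsChord f g u v) : g u = f u := by
  have := h.2.2.2.1 u ⟨le_refl u, h.2.1.le⟩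
  simpa using this

theorem IsChord.gv {f g : ℝ → ℝ} {u v : ℝ} (h : IsChord f g u v) : g v = f v := by
  have hne : v - u ≠ 0 := sub_ne_zero.2 h.2.1.ne'
  have h2 := h.2.2.2.1 v ⟨h.2.1.le, le_refl v⟩
  rw [div_mul_cancel₀ _ hne] at h2
  rw [h2]; ring

theorem deriv_unique {g : ℝ → ℝ} {x a b : ℝ} (hx : x ∈ Icc (0:ℝ) 1)
    (h1 : HasDerivWithinAt g a (Icc (0:ℝ) 1) x)
    (h2 : HasDerivWithinAt g b (Icc (0:ℝ) 1) x) : a = b := by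
  have hu : UniqueDiffWithinAt ℝ (Icc (0:ℝ) 1) x := uniqueDiffOn_Icc zero_lt_one x hx
  rw [← h1.derivWithin hu, ← h2.derivWithin hu]

theorem hL_nonneg {α L : ℝ} {f' : ℝ → ℝ} (hα1 : 1 < α)
    (hHolder : ∀ x ∈ Icc (0:ℝ) 1, ∀ y ∈ Icc (0:ℝ) 1,
      |f' x - f' y| ≤ L * |x - y| ^ (α - 1)) : 0 ≤ L := by
  have h := hHolder 0 (by constructor <;> norm_num) 1 (by constructor <;> norm_num)
  have h2 : |(0:ℝ) - 1| = 1 := by norm_num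
  rw [h2, Real.one_rpow] at h
  have := abs_nonneg (f' 0 - f' 1)
  linarith


theorem taylor_bound {α L : ℝ} {f f' : ℝ → ℝ} (hα1 : 1 < α)
    (hderiv : ∀ x ∈ Icc (0:ℝ) 1, HasDerivWithinAt f (f' x) (Icc 0 1) x)
    (hHolder : ∀ x ∈ Icc (0:ℝ) 1, ∀ y ∈ Icc (0:ℝ) 1,
      |f' x - f' y| ≤ L * |x - y| ^ (α - 1)) (hL : 0 ≤ L) :
    ∀ s ∈ Icc (0:ℝ) 1, ∀ t ∈ Icc (0:ℝ) 1,
      |f t - f s - f' s * (t - s)| ≤ L * |t - s| ^ (α - 1) * |t - s| := by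
  intro s hs t ht
  set J : Set ℝ := Icc (min s t) (max s t) with hJ
  have hJsub : J ⊆ Icc (0:ℝ) 1 := by
    apply Icc_subset_Icc
    · exact le_min hs.1 ht.1
    · exact max_le hs.2 ht.2
  set φ : ℝ → ℝ := fun y => f y - f' s * y with hφ
  have hder : ∀ y ∈ J, HasDerivWithinAt φ (f' y - f' s) J y := by
    intro y hy
    have h1 : HasDerivWithinAt f (f' y) J y :=
      (hderiv y (hJsub hy)).mono hJsub
    have h2 : HasDerivWithinAt (fun y => f' s * y) (f' s) J y := by
      simpa using (hasDerivWithinAt_id y J).const_mul (f' s)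
    exact h1.sub h2
  have hbound : ∀ y ∈ J, ‖f' y - f' s‖ ≤ L * |t - s| ^ (α - 1) := by
    intro y hy
    have h1 := hHolder y (hJsub hy) s hs
    have h2 : |y - s| ≤ |t - s| := by
      rw [abs_sub_le_iff]
      constructor
      · have := hy.1; have := hy.2
        rcases le_total s t with h | h
        · simp [min_eq_left h, max_eq_right h] at *
          rw [abs_of_nonneg (by linarith)]; linarith
        · simp [min_eq_right h, max_eq_left h] at *
          rw [abs_of_nonpos (by linarith)]; linarith
      · have := hy.1; have := hy.2
        rcases le_total s t with h | h
        · simp [min_eq_left h, max_eq_right h] at *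
          rw [abs_of_nonneg (by linarith)]; linarith
        · simp [min_eq_right h, max_eq_left h] at *
          rw [abs_of_nonpos (by linarith)]; linarith
    calc ‖f' y - f' s‖ ≤ L * |y - s| ^ (α - 1) := h1
      _ ≤ L * |t - s| ^ (α - 1) := by
          apply mul_le_mul_of_nonneg_left _ hL
          exact Real.rpow_le_rpow (abs_nonneg _) h2 (by linarith)
  have hconv : Convex ℝ J := convex_Icc _ _
  have hsJ : s ∈ J := ⟨min_le_left _ _, le_max_left _ _⟩
  have htJ : t ∈ J := ⟨min_le_right _ _, le_max_right _ _⟩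
  have := hconv.norm_image_sub_le_of_norm_hasDerivWithin_le hder hbound hsJ htJ
  have heq : φ t - φ s = f t - f s - f' s * (t - s) := by simp [hφ]; ring
  rw [Real.norm_eq_abs, heq, Real.norm_eq_abs] at this
  calc |f t - f s - f' s * (t - s)| ≤ L * |t - s| ^ (α - 1) * |t - s| := this

theorem fib_lb {f : ℝ → ℝ} {c μ : ℝ} (h : ∀ t ∈ Icc (0:ℝ) 1, c + μ * t ≤ f t)
    (x : ℝ) : ∀ y ∈ fib f x, c + μ * x ≤ y := by
  intro y hy
  set H : Set (ℝ × ℝ) := {p : ℝ × ℝ | c + μ * p.1 ≤ p.2} with hH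
  have hconv : Convex ℝ H := by
    intro p hp q hq a b ha hb hab
    simp only [hH, mem_setOf_eq, Prod.fst_add, Prod.snd_add, Prod.smul_fst, Prod.smul_snd,
      smul_eq_mul] at *
    have h1 : a * (c + μ * p.1) ≤ a * p.2 := mul_le_mul_of_nonneg_left hp ha
    have h2 : b * (c + μ * q.1) ≤ b * q.2 := mul_le_mul_of_nonneg_left hq hb
    have h3 : a * c + b * c = c := by rw [← add_mul, hab, one_mul]
    nlinarith [h1, h2, h3]
  have hsub : epi f ⊆ H := by
    rintro p ⟨hp1, hp2⟩
    exact le_trans (h p.1 hp1) hp2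
  exact convexHull_min hsub hconv hy

theorem fib_self {f : ℝ → ℝ} {x : ℝ} (hx : x ∈ Icc (0:ℝ) 1) : f x ∈ fib f x :=
  subset_convexHull ℝ (epi f) ⟨hx, le_refl _⟩

theorem fib_chord {f : ℝ → ℝ} {u v t : ℝ} (hu : u ∈ Icc (0:ℝ) 1) (hv : v ∈ Icc (0:ℝ) 1)
    (huv : u < v) (ht : t ∈ Icc u v) :
    f u + (f v - f u) / (v - u) * (t - u) ∈ fib f t := by
  have hne : v - u ≠ 0 := sub_ne_zero.2 huv.ne'
  set a : ℝ := (v - t) / (v - u) with ha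
  set b : ℝ := (t - u) / (v - u) with hb
  have ha0 : 0 ≤ a := div_nonneg (by linarith [ht.2]) (by linarith)
  have hb0 : 0 ≤ b := div_nonneg (by linarith [ht.1]) (by linarith)
  have hab : a + b = 1 := by
    rw [ha, hb, ← add_div, show v - t + (t - u) = v - u by ring, div_self hne]
  have hmem := (convex_convexHull ℝ (epi f))
    (subset_convexHull ℝ (epi f) (⟨hu, le_refl _⟩ : (u, f u) ∈ epi f))
    (subset_convexHull ℝ (epi f) (⟨hv, le_refl _⟩ : (v, f v) ∈ epi f)) ha0 hb0 hab
  have heq : a • ((u, f u) : ℝ × ℝ) + b • ((v, f v) : ℝ × ℝ)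
      = (t, f u + (f v - f u) / (v - u) * (t - u)) := by
    rw [Prod.smul_mk, Prod.smul_mk, Prod.mk_add_mk, Prod.mk.injEq]
    simp only [smul_eq_mul]
    constructor
    · rw [ha, hb]; field_simp; ring
    · rw [ha, hb]; field_simp; ring
  rw [heq] at hmem
  exact hmem

section G
variable {α L : ℝ} {f f' g : ℝ → ℝ}

-- existence of a global affine lower bound
theorem lower_line (hα1 : 1 < α) (hL : 0 ≤ L)
    (hT : ∀ s ∈ Icc (0:ℝ) 1, ∀ t ∈ Icc (0:ℝ) 1,
      |f t - f s - f' s * (t - s)| ≤ L * |t - s| ^ (α - 1) * |t - s|) :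
    ∀ t ∈ Icc (0:ℝ) 1, f 0 + (f' 0 - L) * t ≤ f t := by
  intro t ht
  have h1 := hT 0 (by constructor <;> norm_num) t ht
  have h2 : |t - 0| = t := by rw [sub_zero, abs_of_nonneg ht.1]
  rw [h2] at h1
  have h3 : t ^ (α - 1) ≤ 1 := Real.rpow_le_one ht.1 ht.2 (by linarith)
  have h4 : L * t ^ (α - 1) * t ≤ L * t := by
    have : L * t ^ (α - 1) ≤ L * 1 := mul_le_mul_of_nonneg_left h3 hL
    nlinarith [ht.1]
  have h5 : f t - f 0 - f' 0 * (t - 0) ≥ -(L * t ^ (α - 1) * t) := by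
    have := abs_le.1 h1
    linarith [this.1]
  nlinarith [ht.1]

theorem g_le_f (hα1 : 1 < α) (hL : 0 ≤ L)
    (hT : ∀ s ∈ Icc (0:ℝ) 1, ∀ t ∈ Icc (0:ℝ) 1,
      |f t - f s - f' s * (t - s)| ≤ L * |t - s| ^ (α - 1) * |t - s|)
    (hg : ∀ x ∈ Icc (0:ℝ) 1, g x = sInf (fib f x)) :
    ∀ x ∈ Icc (0:ℝ) 1, g x ≤ f x := by
  intro x hx
  rw [hg x hx]
  exact csInf_le ⟨f 0 + (f' 0 - L) * x, fib_lb (lower_line hα1 hL hT) x⟩ (fib_self hx)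

theorem line_le_g {c μ : ℝ}
    (hg : ∀ x ∈ Icc (0:ℝ) 1, g x = sInf (fib f x))
    (h : ∀ t ∈ Icc (0:ℝ) 1, c + μ * t ≤ f t) :
    ∀ x ∈ Icc (0:ℝ) 1, c + μ * x ≤ g x := by
  intro x hx
  rw [hg x hx]
  exact le_csInf ⟨f x, fib_self hx⟩ (fib_lb h x)

theorem g_le_chord (hα1 : 1 < α) (hL : 0 ≤ L)
    (hT : ∀ s ∈ Icc (0:ℝ) 1, ∀ t ∈ Icc (0:ℝ) 1,
      |f t - f s - f' s * (t - s)| ≤ L * |t - s| ^ (α - 1) * |t - s|)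
    (hg : ∀ x ∈ Icc (0:ℝ) 1, g x = sInf (fib f x))
    {u v : ℝ} (hu : u ∈ Icc (0:ℝ) 1) (hv : v ∈ Icc (0:ℝ) 1) (huv : u < v) :
    ∀ t ∈ Icc u v, g t ≤ f u + (f v - f u) / (v - u) * (t - u) := by
  intro t ht
  have htI : t ∈ Icc (0:ℝ) 1 := ⟨le_trans hu.1 ht.1, le_trans ht.2 hv.2⟩
  rw [hg t htI]
  exact csInf_le ⟨f 0 + (f' 0 - L) * t, fib_lb (lower_line hα1 hL hT) t⟩
    (fib_chord hu hv huv ht)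

end G

section UL
variable {α L : ℝ} {f f' : ℝ → ℝ}

theorem upper_line (hα1 : 1 < α) (hL : 0 ≤ L)
    (hT : ∀ s ∈ Icc (0:ℝ) 1, ∀ t ∈ Icc (0:ℝ) 1,
      |f t - f s - f' s * (t - s)| ≤ L * |t - s| ^ (α - 1) * |t - s|) :
    ∀ t ∈ Icc (0:ℝ) 1, (f 1 - (f' 1 + L)) + (f' 1 + L) * t ≤ f t := by
  intro t ht
  have h1 := hT 1 (by constructor <;> norm_num) t ht
  have h2 : |t - 1| = 1 - t := by rw [abs_of_nonpos (by linarith [ht.2])]; ring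
  rw [h2] at h1
  have h3 : (1 - t) ^ (α - 1) ≤ 1 :=
    Real.rpow_le_one (by linarith [ht.2]) (by linarith [ht.1]) (by linarith)
  have h4 : L * (1 - t) ^ (α - 1) * (1 - t) ≤ L * (1 - t) := by
    have := mul_le_mul_of_nonneg_right (mul_le_mul_of_nonneg_left h3 hL)
      (by linarith [ht.2] : (0:ℝ) ≤ 1 - t)
    linarith [this]
  have h5 := (abs_le.1 h1).1
  linarith

end UL

theorem mem_nhdsWithin_Icc_of {u v z : ℝ} (hz : z ∈ Icc (0:ℝ) 1) (h1 : u ≤ z) (h2 : z ≤ v)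
    (hl : u < z ∨ u = 0) (hr : z < v ∨ v = 1) :
    Icc u v ∈ nhdsWithin z (Icc (0:ℝ) 1) := by
  obtain ⟨a, haz, hau⟩ : ∃ a, a < z ∧ ∀ t ∈ Icc (0:ℝ) 1, a < t → u ≤ t := by
    rcases hl with h | h
    · exact ⟨u, h, fun t _ ht => ht.le⟩
    · exact ⟨-1, by linarith [hz.1], fun t ht _ => h ▸ ht.1⟩
  obtain ⟨b, hzb, hbv⟩ : ∃ b, z < b ∧ ∀ t ∈ Icc (0:ℝ) 1, t < b → t ≤ v := by
    rcases hr with h | h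
    · exact ⟨v, h, fun t _ ht => ht.le⟩
    · exact ⟨2, by linarith [hz.2], fun t ht _ => h ▸ ht.2⟩
  rw [mem_nhdsWithin]
  refine ⟨Ioo a b, isOpen_Ioo, ⟨haz, hzb⟩, ?_⟩
  rintro t ⟨⟨hta, htb⟩, htI⟩
  exact ⟨hau t htI hta, hbv t htI htb⟩

theorem chord_hasDeriv {f g : ℝ → ℝ} {u v z : ℝ} (ch : IsChord f g u v)
    (hz : z ∈ Icc (0:ℝ) 1) (h1 : u ≤ z) (h2 : z ≤ v)
    (hl : u < z ∨ u = 0) (hr : z < v ∨ v = 1) :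
    HasDerivWithinAt g ((f v - f u) / (v - u)) (Icc (0:ℝ) 1) z := by
  set s := (f v - f u) / (v - u) with hs
  set A : ℝ → ℝ := fun t => f u + s * (t - u) with hA
  have hAd : HasDerivWithinAt A s (Icc (0:ℝ) 1) z := by
    have : HasDerivWithinAt (fun t : ℝ => t - u) 1 (Icc (0:ℝ) 1) z :=
      (hasDerivWithinAt_id z _).sub_const u
    simpa [hA] using (this.const_mul s).const_add (f u)
  have hmem := mem_nhdsWithin_Icc_of hz h1 h2 hl hr
  have hev : g =ᶠ[nhdsWithin z (Icc (0:ℝ) 1)] A :=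
    Filter.eventuallyEq_of_mem hmem (fun t ht => ch.2.2.2.1 t ht)
  exact hAd.congr_of_eventuallyEq hev (ch.2.2.2.1 z ⟨h1, h2⟩)

theorem squeeze_deriv {α C : ℝ} {g : ℝ → ℝ} {x σ : ℝ} (hα1 : 1 < α) (hC : 0 ≤ C)
    (h : ∀ t ∈ Icc (0:ℝ) 1, |g t - g x - σ * (t - x)| ≤ C * |t - x| ^ (α - 1) * |t - x|)
    (hx : x ∈ Icc (0:ℝ) 1) : HasDerivWithinAt g σ (Icc (0:ℝ) 1) x := by
  rw [hasDerivWithinAt_iff_isLittleO]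
  rw [Asymptotics.isLittleO_iff]
  intro c hc
  have T0 : Filter.Tendsto (fun t : ℝ => |t - x|) (nhds x) (nhds 0) := by
    have hcont : Continuous (fun t : ℝ => |t - x|) :=
      (continuous_id.sub continuous_const).abs
    have := hcont.tendsto x
    simpa using this
  have T1 : Filter.Tendsto (fun t : ℝ => C * |t - x| ^ (α - 1)) (nhds x) (nhds 0) := by
    have h2 : Filter.Tendsto (fun y : ℝ => y ^ (α - 1)) (nhds 0) (nhds 0) := by
      have := (Real.continuousAt_rpow_const 0 (α - 1) (Or.inr (by linarith))).tendsto
      rwa [Real.zero_rpow (by linarith)] at this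
    have := (h2.comp T0).const_mul C
    simpa using this
  have hev : ∀ᶠ t in nhds x, C * |t - x| ^ (α - 1) < c := T1.eventually_lt_const hc
  have hev2 : ∀ᶠ t in nhdsWithin x (Icc (0:ℝ) 1), C * |t - x| ^ (α - 1) < c :=
    eventually_nhdsWithin_of_eventually_nhds hev
  have hev3 : ∀ᶠ t in nhdsWithin x (Icc (0:ℝ) 1), t ∈ Icc (0:ℝ) 1 :=
    eventually_mem_nhdsWithin
  filter_upwards [hev2, hev3] with t h1 h2
  have hb := h t h2
  rw [Real.norm_eq_abs, Real.norm_eq_abs]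
  have : |g t - g x - (t - x) * σ| = |g t - g x - σ * (t - x)| := by rw [mul_comm]
  rw [smul_eq_mul, this]
  calc |g t - g x - σ * (t - x)| ≤ C * |t - x| ^ (α - 1) * |t - x| := hb
    _ ≤ c * |t - x| := mul_le_mul_of_nonneg_right h1.le (abs_nonneg _)

theorem rpow_tendsto {α : ℝ} (hα1 : 1 < α) (L : ℝ) :
    Filter.Tendsto (fun δ : ℝ => L * δ ^ (α - 1)) (nhdsWithin 0 (Ioi 0)) (nhds 0) := by
  have h2 : Filter.Tendsto (fun y : ℝ => y ^ (α - 1)) (nhds 0) (nhds 0) := by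
    have := (Real.continuousAt_rpow_const 0 (α - 1) (Or.inr (by linarith))).tendsto
    rwa [Real.zero_rpow (by linarith)] at this
  have h3 : Filter.Tendsto (fun δ : ℝ => L * δ ^ (α - 1)) (nhds 0) (nhds (L * 0)) :=
    h2.const_mul L
  rw [mul_zero] at h3
  exact h3.mono_left nhdsWithin_le_nhds

theorem touching_slope {α L : ℝ} {f f' g : ℝ → ℝ} (hα1 : 1 < α)
    (hT : ∀ s ∈ Icc (0:ℝ) 1, ∀ t ∈ Icc (0:ℝ) 1,
      |f t - f s - f' s * (t - s)| ≤ L * |t - s| ^ (α - 1) * |t - s|)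
    {u v c : ℝ} (ch : IsChord f g u v) (hc : c ∈ Icc u v) (hgc : g c = f c)
    (h0 : 0 < c) (h1 : c < 1) : f' c = (f v - f u) / (v - u) := by
  set s := (f v - f u) / (v - u) with hs
  have hcI : c ∈ Icc (0:ℝ) 1 := ⟨le_trans ch.1 hc.1, le_trans hc.2 ch.2.2.1⟩
  have hlinec : f u + s * (c - u) = f c := by rw [← ch.2.2.2.1 c hc, hgc]
  have key : ∀ t ∈ Icc (0:ℝ) 1, s * (t - c) ≤ f' c * (t - c) + L * |t - c| ^ (α - 1) * |t - c| := by
    intro t ht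
    have hline := ch.2.2.2.2 t ht
    have htay := hT c hcI t ht
    have h2 : f t - f c - f' c * (t - c) ≤ L * |t - c| ^ (α - 1) * |t - c| :=
      le_trans (le_abs_self _) htay
    have h3 : f c + s * (t - c) ≤ f t := by
      have : f u + s * (t - u) = (f u + s * (c - u)) + s * (t - c) := by ring
      rw [this, hlinec] at hline
      exact hline
    linarith
  have hub : s - f' c ≤ 0 := by
    have hev : ∀ᶠ δ in nhdsWithin 0 (Ioi (0:ℝ)), s - f' c ≤ L * δ ^ (α - 1) := by
      filter_upwards [Ioo_mem_nhdsGT_of_mem (⟨le_refl (0:ℝ), by linarith⟩ : (0:ℝ) ∈ Ico 0 (1 - c))]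
      rintro δ ⟨hδ0, hδ1⟩
      have htI : c + δ ∈ Icc (0:ℝ) 1 := ⟨by linarith [hcI.1], by linarith⟩
      have := key (c + δ) htI
      have habs : |c + δ - c| = δ := by rw [show c + δ - c = δ by ring, abs_of_pos hδ0]
      rw [habs, show c + δ - c = δ by ring] at this
      have hδ0' : 0 < δ := hδ0
      nlinarith [this]
    have := ge_of_tendsto (rpow_tendsto hα1 L) hev
    linarith
  have hlb : f' c - s ≤ 0 := by
    have hev : ∀ᶠ δ in nhdsWithin 0 (Ioi (0:ℝ)), f' c - s ≤ L * δ ^ (α - 1) := by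
      filter_upwards [Ioo_mem_nhdsGT_of_mem (⟨le_refl (0:ℝ), by linarith⟩ : (0:ℝ) ∈ Ico 0 c)]
      rintro δ ⟨hδ0, hδ1⟩
      have htI : c - δ ∈ Icc (0:ℝ) 1 := ⟨by linarith, by linarith [hcI.2]⟩
      have := key (c - δ) htI
      have habs : |c - δ - c| = δ := by rw [show c - δ - c = -δ by ring, abs_neg, abs_of_pos hδ0]
      rw [habs, show c - δ - c = -δ by ring] at this
      nlinarith [this]
    have := ge_of_tendsto (rpow_tendsto hα1 L) hev
    linarith
  linarith

section E
variable {α L : ℝ} {f f' g : ℝ → ℝ}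

set_option maxHeartbeats 2000000 in
theorem structure_dichotomy (hα1 : 1 < α) (hL : 0 ≤ L)
    (hT : ∀ s ∈ Icc (0:ℝ) 1, ∀ t ∈ Icc (0:ℝ) 1,
      |f t - f s - f' s * (t - s)| ≤ L * |t - s| ^ (α - 1) * |t - s|)
    (hHolder : ∀ x ∈ Icc (0:ℝ) 1, ∀ y ∈ Icc (0:ℝ) 1,
      |f' x - f' y| ≤ L * |x - y| ^ (α - 1))
    (hfc : ContinuousOn f (Icc (0:ℝ) 1))
    (hgA : ∀ x ∈ Icc (0:ℝ) 1, g x ≤ f x)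
    (hgC : ∀ c μ : ℝ, (∀ t ∈ Icc (0:ℝ) 1, c + μ * t ≤ f t) →
      ∀ x ∈ Icc (0:ℝ) 1, c + μ * x ≤ g x)
    (hgch : ∀ u v : ℝ, u ∈ Icc (0:ℝ) 1 → v ∈ Icc (0:ℝ) 1 → u < v →
      ∀ t ∈ Icc u v, g t ≤ f u + (f v - f u) / (v - u) * (t - u))
    {x : ℝ} (hx : x ∈ Ioo (0:ℝ) 1) :
    g x = f x ∨ ∃ u v, IsChord f g u v ∧ u < x ∧ x < v := by
  have hx0 : 0 < x := hx.1
  have hx1 : x < 1 := hx.2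
  have hxI : x ∈ Icc (0:ℝ) 1 := ⟨hx0.le, hx1.le⟩
  -- Lipschitz bound for f
  have hf'bd : ∀ s ∈ Icc (0:ℝ) 1, |f' s| ≤ |f' 0| + L := by
    intro s hs
    have h1 := hHolder s hs 0 (by constructor <;> norm_num)
    have h2 : |s - 0| ^ (α - 1) ≤ 1 :=
      Real.rpow_le_one (abs_nonneg _) (by rw [sub_zero, abs_of_nonneg hs.1]; exact hs.2)
        (by linarith)
    have h3 : |f' s - f' 0| ≤ L := le_trans h1 (by nlinarith)
    calc |f' s| = |f' 0 + (f' s - f' 0)| := by ring_nf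
      _ ≤ |f' 0| + |f' s - f' 0| := abs_add_le _ _
      _ ≤ |f' 0| + L := by linarith
  set M : ℝ := |f' 0| + 2 * L + 1 with hM
  have hM0 : 0 < M := by positivity
  have hLip : ∀ s ∈ Icc (0:ℝ) 1, ∀ t ∈ Icc (0:ℝ) 1, |f t - f s| ≤ M * |t - s| := by
    intro s hs t ht
    have h1 := hT s hs t ht
    have h2 : |t - s| ^ (α - 1) ≤ 1 := by
      apply Real.rpow_le_one (abs_nonneg _) _ (by linarith)
      rw [abs_le]; constructor <;> [linarith [hs.2, ht.1]; linarith [hs.1, ht.2]]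
    have h3 : |f t - f s| ≤ |f' s * (t - s)| + |f t - f s - f' s * (t - s)| := by
      have := abs_add_le (f' s * (t - s)) (f t - f s - f' s * (t - s))
      simpa [add_sub_cancel] using this
    have h4 : |f' s * (t - s)| ≤ (|f' 0| + L) * |t - s| := by
      rw [abs_mul]
      exact mul_le_mul_of_nonneg_right (hf'bd s hs) (abs_nonneg _)
    have h5 : L * |t - s| ^ (α - 1) * |t - s| ≤ L * |t - s| := by
      have := mul_le_mul_of_nonneg_right (mul_le_mul_of_nonneg_left h2 hL) (abs_nonneg (t - s))
      linarith [this]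
    rw [hM]
    linarith [h3, h4, h1, h5, abs_nonneg (t - s)]
  by_cases hA : ∀ u v : ℝ, 0 ≤ u → u ≤ x → x ≤ v → v ≤ 1 → u < v →
      f x * (v - u) ≤ (v - x) * f u + (x - u) * f v
  · -- contact case: build a supporting line through (x, f x)
    left
    set Sl : Set ℝ := (fun a => (f x - f a) / (x - a)) '' (Ico 0 x) with hSl
    have hne : Sl.Nonempty := ⟨_, ⟨0, ⟨le_refl 0, hx0⟩, rfl⟩⟩
    have hbdd : BddAbove Sl := by
      refine ⟨f' x + L, ?_⟩
      rintro y ⟨a, ⟨ha0, hax⟩, rfl⟩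
      have haI : a ∈ Icc (0:ℝ) 1 := ⟨ha0, by linarith⟩
      have h1 := hT x hxI a haI
      have habs : |a - x| = x - a := by rw [abs_of_nonpos (by linarith)]; ring
      rw [habs] at h1
      have h2 : (x - a) ^ (α - 1) ≤ 1 :=
        Real.rpow_le_one (by linarith) (by linarith [haI.1, hxI.2]) (by linarith)
      have h3 : f a - f x - f' x * (a - x) ≥ -(L * (x - a)) := by
        have h1' := (abs_le.1 h1).1
        have := mul_le_mul_of_nonneg_right
          (mul_le_mul_of_nonneg_left h2 hL) (by linarith : (0:ℝ) ≤ x - a)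
        linarith [this]
      rw [div_le_iff₀ (by linarith : (0:ℝ) < x - a)]
      nlinarith
    set μ : ℝ := sSup Sl with hμ
    have hbelow : ∀ t ∈ Icc (0:ℝ) 1, f x + μ * (t - x) ≤ f t := by
      intro t ht
      rcases lt_trichotomy t x with h | h | h
      · have hmem : (f x - f t) / (x - t) ∈ Sl := ⟨t, ⟨ht.1, h⟩, rfl⟩
        have h1 : (f x - f t) / (x - t) ≤ μ := le_csSup hbdd hmem
        have h2 : μ * (t - x) ≤ (f x - f t) / (x - t) * (t - x) := by
          apply mul_le_mul_of_nonpos_right h1 (by linarith)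
        have h3 : (f x - f t) / (x - t) * (t - x) = f t - f x := by
          rw [show t - x = -(x - t) by ring, mul_neg,
            div_mul_cancel₀ _ (ne_of_gt (by linarith : (0:ℝ) < x - t))]
          ring
        linarith
      · simp [h]
      · have h1 : μ ≤ (f t - f x) / (t - x) := by
          apply csSup_le hne
          rintro y ⟨a, ⟨ha0, hax⟩, rfl⟩
          have hkey := hA a t ha0 hax.le h.le ht.2 (by linarith)
          rw [div_le_div_iff₀ (by linarith : (0:ℝ) < x - a) (by linarith : (0:ℝ) < t - x)]
          nlinarith
        have h2 : μ * (t - x) ≤ (f t - f x) / (t - x) * (t - x) :=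
          mul_le_mul_of_nonneg_right h1 (by linarith)
        have h3 : (f t - f x) / (t - x) * (t - x) = f t - f x :=
          div_mul_cancel₀ _ (ne_of_gt (by linarith : (0:ℝ) < t - x))
        linarith
      -- done trichotomy
    have hup : g x ≤ f x := hgA x hxI
    have hdown : f x ≤ g x := by
      have := hgC (f x - μ * x) μ (by
        intro t ht
        have := hbelow t ht
        linarith [this]) x hxI
      linarith
    linarith
  · -- chord case
    right
    push_neg at hA
    obtain ⟨u₀, v₀, h0u, hux0, hxv0, hv10, huv0, hP0⟩ := hA
    set F : ℝ × ℝ → ℝ := fun p => ((p.2 - x) * f p.1 + (x - p.1) * f p.2) / (p.2 - p.1)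
      with hF
    have hFval : ∀ a b : ℝ, a < b →
        F (a, b) = ((b - x) * f a + (x - a) * f b) / (b - a) := fun a b _ => rfl
    -- diagonal lower bound for F
    have dia : ∀ a b : ℝ, 0 ≤ a → a ≤ x → x ≤ b → b ≤ 1 → a < b →
        f x - 2 * M * (b - a) ≤ F (a, b) := by
      intro a b ha0 hax hxb hb1 hab
      have haI : a ∈ Icc (0:ℝ) 1 := ⟨ha0, by linarith⟩
      have hbI : b ∈ Icc (0:ℝ) 1 := ⟨by linarith, hb1⟩
      have h1 : |f a - f x| ≤ M * (x - a) := by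
        have := hLip x hxI a haI
        rwa [show |a - x| = x - a by rw [abs_of_nonpos (by linarith)]; ring] at this
      have h2 : |f b - f x| ≤ M * (b - x) := by
        have := hLip x hxI b hbI
        rwa [show |b - x| = b - x by rw [abs_of_nonneg (by linarith)]] at this
      rw [hFval a b hab, le_div_iff₀ (by linarith : (0:ℝ) < b - a)]
      have e1 : f a - f x ≥ -(M * (x - a)) := by linarith [(abs_le.1 h1).1]
      have e2 : f b - f x ≥ -(M * (b - x)) := by linarith [(abs_le.1 h2).1]
      have e1' : -(M * (x - a)) ≤ f a - f x := e1
      have e2' : -(M * (b - x)) ≤ f b - f x := e2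
      have q1 : (b - x) * (-(M * (x - a))) ≤ (b - x) * (f a - f x) :=
        mul_le_mul_of_nonneg_left e1' (by linarith)
      have q2 : (x - a) * (-(M * (b - x))) ≤ (x - a) * (f b - f x) :=
        mul_le_mul_of_nonneg_left e2' (by linarith)
      have q3 : (b - x) * (x - a) ≤ (b - a) * (b - a) := by
        nlinarith [sq_nonneg (b - x - (x - a)), sq_nonneg (b - a)]
      nlinarith [q1, q2, q3, hM0]
    set F₀ : ℝ := F (u₀, v₀) with hF₀
    have hF0' : F₀ < f x := by
      rw [hF₀, hFval _ _ huv0, div_lt_iff₀ (by linarith : (0:ℝ) < v₀ - u₀)]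
      linarith
    set δ : ℝ := (f x - F₀) / (2 * M) with hδdef
    have hδ0 : 0 < δ := div_pos (by linarith) (by linarith)
    have hδ0' : δ ≤ v₀ - u₀ := by
      have := dia u₀ v₀ h0u hux0 hxv0 hv10 huv0
      rw [hδdef, div_le_iff₀ (by linarith : (0:ℝ) < 2 * M)]
      nlinarith
    set K : Set (ℝ × ℝ) := {p | 0 ≤ p.1 ∧ p.1 ≤ x ∧ x ≤ p.2 ∧ p.2 ≤ 1 ∧ δ ≤ p.2 - p.1}
      with hK
    have hKclosed : IsClosed K := by
      have : K = {p : ℝ × ℝ | 0 ≤ p.1} ∩ ({p | p.1 ≤ x} ∩ ({p | x ≤ p.2} ∩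
          ({p | p.2 ≤ 1} ∩ {p | δ ≤ p.2 - p.1}))) := by
        ext p; simp [hK, and_assoc]
      rw [this]
      exact (isClosed_le continuous_const continuous_fst).inter
        ((isClosed_le continuous_fst continuous_const).inter
          ((isClosed_le continuous_const continuous_snd).inter
            ((isClosed_le continuous_snd continuous_const).inter
              (isClosed_le continuous_const (continuous_snd.sub continuous_fst)))))
    have hKcomp : IsCompact K := by
      apply IsCompact.of_isClosed_subset (isCompact_Icc.prod isCompact_Icc) hKclosed
      rintro p ⟨h1, h2, h3, h4, h5⟩
      exact ⟨⟨h1, le_trans h2 hx1.le⟩, ⟨le_trans hx0.le h3, h4⟩⟩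
    have hKne : K.Nonempty := ⟨(u₀, v₀), h0u, hux0, hxv0, hv10, hδ0'⟩
    have hFcont : ContinuousOn F K := by
      have hfc1 : ContinuousOn (fun p : ℝ × ℝ => f p.1) K :=
        hfc.comp continuous_fst.continuousOn (fun p hp => ⟨hp.1, le_trans hp.2.1 hx1.le⟩)
      have hfc2 : ContinuousOn (fun p : ℝ × ℝ => f p.2) K :=
        hfc.comp continuous_snd.continuousOn
          (fun p hp => ⟨le_trans hx0.le hp.2.2.1, hp.2.2.2.1⟩)
      apply ContinuousOn.div
      · exact (((continuous_snd.sub continuous_const).continuousOn).mul hfc1).add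
          (((continuous_const.sub continuous_fst).continuousOn).mul hfc2)
      · exact (continuous_snd.sub continuous_fst).continuousOn
      · intro p hp
        exact ne_of_gt (lt_of_lt_of_le hδ0 hp.2.2.2.2)
    obtain ⟨⟨u, v⟩, hKuv, hminOn⟩ := hKcomp.exists_isMinOn hKne hFcont
    obtain ⟨hu0', hux'', hxv'', hv1'', hδuv'⟩ := hKuv
    have hu0 : 0 ≤ u := hu0'
    have hux' : u ≤ x := hux''
    have hxv' : x ≤ v := hxv''
    have hv1' : v ≤ 1 := hv1''
    have hδuv : δ ≤ v - u := hδuv'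
    clear hu0' hux'' hxv'' hv1'' hδuv'
    have huv : u < v := by linarith
    have hmin0 : F (u, v) ≤ F₀ := isMinOn_iff.mp hminOn (u₀, v₀) ⟨h0u, hux0, hxv0, hv10, hδ0'⟩
    have hmin' : ∀ a b : ℝ, 0 ≤ a → a ≤ x → x ≤ b → b ≤ 1 → a < b → F (u, v) ≤ F (a, b) := by
      intro a b ha0 hax hxb hb1 hab
      by_cases hd : δ ≤ b - a
      · exact isMinOn_iff.mp hminOn (a, b) ⟨ha0, hax, hxb, hb1, hd⟩
      · push_neg at hd
        have h1 := dia a b ha0 hax hxb hb1 hab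
        have h2 : 2 * M * δ = f x - F₀ := by
          rw [hδdef]; field_simp
        have h3 : 2 * M * (b - a) < 2 * M * δ :=
          mul_lt_mul_of_pos_left hd (by linarith)
        have : F (u, v) < F (a, b) := by
          calc F (u, v) ≤ F₀ := hmin0
            _ = f x - 2 * M * δ := by linarith
            _ < f x - 2 * M * (b - a) := by linarith
            _ ≤ F (a, b) := h1
        exact this.le
    have hFuvlt : F (u, v) < f x := lt_of_le_of_lt hmin0 hF0'
    have hux : u < x := by
      rcases lt_or_eq_of_le hux' with h | h
      · exact h
      · exfalso
        have h' : u = x := h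
        have hvx : (0:ℝ) < v - x := by rw [h'] at huv; linarith
        have heq : F (u, v) = f x := by
          rw [hFval _ _ huv, h']
          rw [show (v - x) * f x + (x - x) * f v = f x * (v - x) by ring,
            mul_div_assoc, div_self (ne_of_gt hvx), mul_one]
        linarith
    have hxv : x < v := by
      rcases lt_or_eq_of_le hxv' with h | h
      · exact h
      · exfalso
        have h' : x = v := h
        have hxu : (0:ℝ) < x - u := by
          have h2 := huv
          rw [← h'] at h2
          linarith
        have heq : F (u, v) = f x := by
          rw [hFval _ _ huv, ← h']
          rw [show (x - x) * f u + (x - u) * f x = f x * (x - u) by ring,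
            mul_div_assoc, div_self (ne_of_gt hxu), mul_one]
        linarith
    have hvu : v - u ≠ 0 := ne_of_gt (by linarith : (0:ℝ) < v - u)
    have hslv : f u + (f v - f u) / (v - u) * (v - u) = f v := by
      rw [div_mul_cancel₀ _ hvu]; ring
    have hlineF : f u + (f v - f u) / (v - u) * (x - u) = F (u, v) := by
      rw [hFval _ _ huv]
      field_simp
      ring
    have line_le : ∀ t ∈ Icc (0:ℝ) 1, f u + (f v - f u) / (v - u) * (t - u) ≤ f t := by
      by_contra hcon
      push_neg at hcon
      obtain ⟨t, htI, hlt⟩ := hcon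
      rcases le_or_gt t x with htx | hxt
      · have htv : t < v := by linarith
        have hFtv : F (t, v) < F (u, v) := by
          rw [hFval _ _ htv, div_lt_iff₀ (by linarith : (0:ℝ) < v - t)]
          have key : (f u + (f v - f u) / (v - u) * (x - u)) * (v - t)
              = (v - x) * (f u + (f v - f u) / (v - u) * (t - u)) + (x - t) * (f u + (f v - f u) / (v - u) * (v - u)) := by ring
          rw [← hlineF]
          calc (v - x) * f t + (x - t) * f v
              < (v - x) * (f u + (f v - f u) / (v - u) * (t - u)) + (x - t) * f v := by
                have := mul_lt_mul_of_pos_left hlt (by linarith : (0:ℝ) < v - x)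
                linarith
            _ = (v - x) * (f u + (f v - f u) / (v - u) * (t - u)) + (x - t) * (f u + (f v - f u) / (v - u) * (v - u)) := by
                rw [hslv]
            _ = (f u + (f v - f u) / (v - u) * (x - u)) * (v - t) := key.symm
        exact absurd (hmin' t v htI.1 htx hxv' hv1' htv) (not_le.2 hFtv)
      · have hut : u < t := by linarith
        have hFut : F (u, t) < F (u, v) := by
          rw [hFval _ _ hut, div_lt_iff₀ (by linarith : (0:ℝ) < t - u)]
          have key : (f u + (f v - f u) / (v - u) * (x - u)) * (t - u)
              = (t - x) * f u + (x - u) * (f u + (f v - f u) / (v - u) * (t - u)) := by ring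
          rw [← hlineF]
          calc (t - x) * f u + (x - u) * f t
              < (t - x) * f u + (x - u) * (f u + (f v - f u) / (v - u) * (t - u)) := by
                have := mul_lt_mul_of_pos_left hlt (by linarith : (0:ℝ) < x - u)
                linarith
            _ = (f u + (f v - f u) / (v - u) * (x - u)) * (t - u) := key.symm
        exact absurd (hmin' u t hu0 hux.le hxt.le htI.2 hut) (not_le.2 hFut)
    have huI : u ∈ Icc (0:ℝ) 1 := ⟨hu0, by linarith⟩
    have hvI : v ∈ Icc (0:ℝ) 1 := ⟨by linarith, hv1'⟩
    have g_aff : ∀ t ∈ Icc u v, g t = f u + (f v - f u) / (v - u) * (t - u) := by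
      intro t ht
      have htI : t ∈ Icc (0:ℝ) 1 := ⟨le_trans huI.1 ht.1, le_trans ht.2 hvI.2⟩
      apply le_antisymm (hgch u v huI hvI huv t ht)
      have := hgC (f u - (f v - f u) / (v - u) * u) ((f v - f u) / (v - u)) (by
        intro r hr
        have := line_le r hr
        linarith) t htI
      linarith
    exact ⟨u, v, ⟨hu0, huv, hv1', g_aff, line_le⟩, hux, hxv⟩

end E

theorem contact_squeeze {α L : ℝ} {f f' g : ℝ → ℝ} (hα1 : 1 < α) (hL : 0 ≤ L)
    (hT : ∀ s ∈ Icc (0:ℝ) 1, ∀ t ∈ Icc (0:ℝ) 1,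
      |f t - f s - f' s * (t - s)| ≤ L * |t - s| ^ (α - 1) * |t - s|)
    (hHolder : ∀ x ∈ Icc (0:ℝ) 1, ∀ y ∈ Icc (0:ℝ) 1,
      |f' x - f' y| ≤ L * |x - y| ^ (α - 1))
    (hgA : ∀ x ∈ Icc (0:ℝ) 1, g x ≤ f x)
    (hg0 : g 0 = f 0) (hg1 : g 1 = f 1)
    (hdich : ∀ t ∈ Ioo (0:ℝ) 1, g t = f t ∨ ∃ u v, IsChord f g u v ∧ u < t ∧ t < v)
    {x : ℝ} (hxI : x ∈ Icc (0:ℝ) 1) (hgx : g x = f x)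
    (Hcond : ∀ u v, IsChord f g u v → u ≤ x → x ≤ v → 0 < x ∧ x < 1) :
    ∀ t ∈ Icc (0:ℝ) 1, |g t - g x - f' x * (t - x)|
      ≤ 2 * L * |t - x| ^ (α - 1) * |t - x| := by
  intro t ht
  have hrpow_nonneg : (0:ℝ) ≤ |t - x| ^ (α - 1) := Real.rpow_nonneg (abs_nonneg _) _
  have habs_nonneg : (0:ℝ) ≤ |t - x| := abs_nonneg _
  have hTay := hT x hxI t ht
  rw [abs_le]
  constructor
  swap
  · -- upper bound
    have h1 : g t ≤ f t := hgA t ht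
    have h2 := (abs_le.1 hTay).2
    rw [hgx]
    nlinarith [mul_nonneg (mul_nonneg hL hrpow_nonneg) habs_nonneg]
  · -- lower bound
    -- the contact sub-case
    have contact_lower : g t = f t → -(2 * L * |t - x| ^ (α - 1) * |t - x|)
        ≤ g t - g x - f' x * (t - x) := by
      intro hgt
      rw [hgt, hgx]
      have h2 := (abs_le.1 hTay).1
      nlinarith [mul_nonneg (mul_nonneg hL hrpow_nonneg) habs_nonneg]
    rcases eq_or_lt_of_le ht.1 with h0t | h0t
    · exact contact_lower (by rw [← h0t, hg0])
    rcases eq_or_lt_of_le ht.2 with ht1 | ht1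
    · exact contact_lower (by rw [ht1, hg1])
    rcases hdich t ⟨h0t, ht1⟩ with hgt | ⟨u, v, ch, hut, htv⟩
    · exact contact_lower hgt
    have huI : u ∈ Icc (0:ℝ) 1 := ⟨ch.1, le_trans ch.2.1.le ch.2.2.1⟩
    have hvI : v ∈ Icc (0:ℝ) 1 := ⟨le_trans ch.1 ch.2.1.le, ch.2.2.1⟩
    by_cases hmid : u ≤ x ∧ x ≤ v
    · -- x lies in the chord; slope equals f' x and g is affine there
      obtain ⟨hx0, hx1⟩ := Hcond u v ch hmid.1 hmid.2
      have hsl := touching_slope hα1 hT ch ⟨hmid.1, hmid.2⟩ hgx hx0 hx1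
      have haff_t := ch.2.2.2.1 t ⟨hut.le, htv.le⟩
      have haff_x := ch.2.2.2.1 x ⟨hmid.1, hmid.2⟩
      have : g t - g x - f' x * (t - x) = 0 := by
        rw [haff_t, haff_x, hsl]; ring
      rw [this]
      simp only [neg_nonpos]
      positivity
    · push_neg at hmid
      rcases le_or_gt u x with hux | hxu
      · -- then v < x, chord is to the left of x, and t < v
        have hvx : v < x := hmid hux
        have htv' : t < v := htv
        have hA0 : (0:ℝ) ≤ x - v := by linarith
        have hB0 : (0:ℝ) ≤ v - t := by linarith
        have hv0 : 0 < v := lt_trans h0t htv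
        have hv1 : v < 1 := lt_of_lt_of_le hvx hxI.2
        have hsl := touching_slope hα1 hT ch ⟨ch.2.1.le, le_refl v⟩ ch.gv hv0 hv1
        have haff_t := ch.2.2.2.1 t ⟨hut.le, htv.le⟩
        have haff_v := ch.2.2.2.1 v ⟨ch.2.1.le, le_refl v⟩
        have hfv : f v = f u + (f v - f u) / (v - u) * (v - u) := by
          have h2 := haff_v
          rw [ch.gv] at h2
          exact h2
        have hgt' : g t = f v + f' v * (t - v) := by
          rw [hsl, haff_t]
          nth_rewrite 2 [hfv]
          ring
        have habs : |t - x| = x - t := by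
          rw [abs_of_nonpos (by linarith)]; ring
        have habs2 : |v - x| = x - v := by
          rw [abs_of_nonpos (by linarith)]; ring
        have hTv := hT x hxI v hvI
        rw [habs2] at hTv
        have hHv := hHolder v hvI x hxI
        rw [habs2] at hHv
        have e1 : -(L * (x - v) ^ (α - 1) * (x - v)) ≤ f v - f x - f' x * (v - x) :=
          (abs_le.1 hTv).1
        have e2 : L * (x - v) ^ (α - 1) * (t - v) ≤ (f' v - f' x) * (t - v) :=
          mul_le_mul_of_nonpos_right (abs_le.1 hHv).2 (by linarith)
        have e3 : L * (x - v) ^ (α - 1) ≤ L * (x - t) ^ (α - 1) :=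
          mul_le_mul_of_nonneg_left
            (Real.rpow_le_rpow hA0 (by linarith) (by linarith)) hL
        have e4 : L * (x - v) ^ (α - 1) * (x - t) ≤ L * (x - t) ^ (α - 1) * (x - t) :=
          mul_le_mul_of_nonneg_right e3 (by linarith)
        have e5 : (0:ℝ) ≤ L * (x - t) ^ (α - 1) * (x - t) :=
          mul_nonneg (mul_nonneg hL
            (Real.rpow_nonneg (by linarith : (0:ℝ) ≤ x - t) (α - 1))) (by linarith)
        have hgid : g t - g x - f' x * (t - x)
            = (f v - f x - f' x * (v - x)) + (f' v - f' x) * (t - v) := by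
          rw [hgt', hgx]; ring
        rw [habs, hgid]
        linarith [e1, e2, e4, e5]
      · -- x < u, chord is to the right of x, and t > u
        have hu1 : u < 1 := lt_trans hut ht1
        have hsl := touching_slope hα1 hT ch ⟨le_refl u, ch.2.1.le⟩ ch.gu
          (lt_of_le_of_lt hxI.1 hxu) hu1
        have haff_t := ch.2.2.2.1 t ⟨hut.le, htv.le⟩
        have hgt' : g t = f u + f' u * (t - u) := by rw [hsl, haff_t]
        have habs : |t - x| = t - x := by
          rw [abs_of_nonneg (by linarith)]
        have habs2 : |u - x| = u - x := by
          rw [abs_of_nonneg (by linarith)]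
        have hTu := hT x hxI u huI
        rw [habs2] at hTu
        have hHu := hHolder u huI x hxI
        rw [habs2] at hHu
        have e1 : -(L * (u - x) ^ (α - 1) * (u - x)) ≤ f u - f x - f' x * (u - x) :=
          (abs_le.1 hTu).1
        have e2 : -(L * (u - x) ^ (α - 1)) * (t - u) ≤ (f' u - f' x) * (t - u) :=
          mul_le_mul_of_nonneg_right (abs_le.1 hHu).1 (by linarith)
        have e3 : L * (u - x) ^ (α - 1) ≤ L * (t - x) ^ (α - 1) :=
          mul_le_mul_of_nonneg_left
            (Real.rpow_le_rpow (by linarith) (by linarith) (by linarith)) hL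
        have e4 : L * (u - x) ^ (α - 1) * (t - x) ≤ L * (t - x) ^ (α - 1) * (t - x) :=
          mul_le_mul_of_nonneg_right e3 (by linarith)
        have e5 : (0:ℝ) ≤ L * (t - x) ^ (α - 1) * (t - x) :=
          mul_nonneg (mul_nonneg hL
            (Real.rpow_nonneg (by linarith : (0:ℝ) ≤ t - x) (α - 1))) (by linarith)
        have hgid : g t - g x - f' x * (t - x)
            = (f u - f x - f' x * (u - x)) + (f' u - f' x) * (t - u) := by
          rw [hgt', hgx]; ring
        rw [habs, hgid]
        linarith [e1, e2, e4, e5]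

section T
variable {α L : ℝ} {f f' g : ℝ → ℝ}

theorem exists_good_deriv (hα1 : 1 < α) (hL : 0 ≤ L)
    (hT : ∀ s ∈ Icc (0:ℝ) 1, ∀ t ∈ Icc (0:ℝ) 1,
      |f t - f s - f' s * (t - s)| ≤ L * |t - s| ^ (α - 1) * |t - s|)
    (hHolder : ∀ x ∈ Icc (0:ℝ) 1, ∀ y ∈ Icc (0:ℝ) 1,
      |f' x - f' y| ≤ L * |x - y| ^ (α - 1))
    (hgA : ∀ x ∈ Icc (0:ℝ) 1, g x ≤ f x)
    (hg0 : g 0 = f 0) (hg1 : g 1 = f 1)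
    (hdich : ∀ t ∈ Ioo (0:ℝ) 1, g t = f t ∨ ∃ u v, IsChord f g u v ∧ u < t ∧ t < v) :
    ∀ x ∈ Icc (0:ℝ) 1, ∃ σ, HasDerivWithinAt g σ (Icc (0:ℝ) 1) x ∧
      ((g x = f x ∧ σ = f' x) ∨
        ∃ u v, IsChord f g u v ∧ u ≤ x ∧ x ≤ v ∧ σ = (f v - f u) / (v - u)) := by
  intro x hx
  rcases eq_or_lt_of_le hx.1 with h0 | h0
  · -- x = 0
    by_cases hch : ∃ v, IsChord f g 0 v
    · obtain ⟨v, ch⟩ := hch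
      refine ⟨(f v - f 0) / (v - 0),
        chord_hasDeriv ch hx (by rw [← h0]) (by rw [← h0]; exact ch.2.1.le)
          (Or.inr rfl) (Or.inl (by rw [← h0]; exact ch.2.1)), Or.inr ⟨0, v, ch,
        by rw [← h0], by rw [← h0]; exact ch.2.1.le, rfl⟩⟩
    · refine ⟨f' x, ?_, Or.inl ⟨by rw [← h0, hg0], rfl⟩⟩
      refine squeeze_deriv hα1 (by linarith : (0:ℝ) ≤ 2 * L) ?_ hx
      refine contact_squeeze hα1 hL hT hHolder hgA hg0 hg1 hdich hx (by rw [← h0, hg0]) ?_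
      intro u v ch hux hxv
      exfalso
      exact hch ⟨v, by rwa [le_antisymm (by rw [h0]; exact hux) ch.1] at ch⟩
  · rcases eq_or_lt_of_le hx.2 with h1 | h1
    · -- x = 1
      by_cases hch : ∃ u, IsChord f g u 1
      · obtain ⟨u, ch⟩ := hch
        have hu1 : u < 1 := ch.2.1
        refine ⟨(f 1 - f u) / (1 - u),
          chord_hasDeriv ch hx (by rw [h1]; exact hu1.le) h1.le
            (Or.inl (by rw [h1]; exact hu1)) (Or.inr rfl), Or.inr ⟨u, 1, ch,
          by rw [h1]; exact hu1.le, h1.le, rfl⟩⟩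
      · refine ⟨f' x, ?_, Or.inl ⟨by rw [h1, hg1], rfl⟩⟩
        refine squeeze_deriv hα1 (by linarith : (0:ℝ) ≤ 2 * L) ?_ hx
        refine contact_squeeze hα1 hL hT hHolder hgA hg0 hg1 hdich hx (by rw [h1, hg1]) ?_
        intro u v ch hux hxv
        exfalso
        exact hch ⟨u, by rwa [le_antisymm ch.2.2.1 (by rw [← h1]; exact hxv)] at ch⟩
    · -- interior
      rcases hdich x ⟨h0, h1⟩ with hgx | ⟨u, v, ch, hux, hxv⟩
      · refine ⟨f' x, ?_, Or.inl ⟨hgx, rfl⟩⟩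
        refine squeeze_deriv hα1 (by linarith : (0:ℝ) ≤ 2 * L) ?_ hx
        exact contact_squeeze hα1 hL hT hHolder hgA hg0 hg1 hdich hx hgx
          (fun u v ch h2 h3 => ⟨h0, h1⟩)
      · exact ⟨(f v - f u) / (v - u),
          chord_hasDeriv ch hx hux.le hxv.le (Or.inl hux) (Or.inl hxv),
          Or.inr ⟨u, v, ch, hux.le, hxv.le, rfl⟩⟩

end T

section P
variable {α L : ℝ} {f f' g : ℝ → ℝ}

theorem holder_main (hα1 : 1 < α) (hL : 0 ≤ L)
    (hT : ∀ s ∈ Icc (0:ℝ) 1, ∀ t ∈ Icc (0:ℝ) 1,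
      |f t - f s - f' s * (t - s)| ≤ L * |t - s| ^ (α - 1) * |t - s|)
    (hHolder : ∀ x ∈ Icc (0:ℝ) 1, ∀ y ∈ Icc (0:ℝ) 1,
      |f' x - f' y| ≤ L * |x - y| ^ (α - 1))
    {x y σx σy : ℝ} (hx : x ∈ Icc (0:ℝ) 1) (hy : y ∈ Icc (0:ℝ) 1) (hxy : x < y)
    (Dx : HasDerivWithinAt g σx (Icc (0:ℝ) 1) x)
    (Dy : HasDerivWithinAt g σy (Icc (0:ℝ) 1) y)
    (Gx : (g x = f x ∧ σx = f' x) ∨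
      ∃ u v, IsChord f g u v ∧ u ≤ x ∧ x ≤ v ∧ σx = (f v - f u) / (v - u))
    (Gy : (g y = f y ∧ σy = f' y) ∨
      ∃ u v, IsChord f g u v ∧ u ≤ y ∧ y ≤ v ∧ σy = (f v - f u) / (v - u)) :
    |σx - σy| ≤ L * |x - y| ^ (α - 1) := by
  have habs : |x - y| = y - x := by rw [abs_of_nonpos (by linarith)]; ring
  have hRHS : (0:ℝ) ≤ L * |x - y| ^ (α - 1) :=
    mul_nonneg hL (Real.rpow_nonneg (abs_nonneg _) _)
  have hstep : ∀ p q : ℝ, p ∈ Icc (0:ℝ) 1 → q ∈ Icc (0:ℝ) 1 → x ≤ p → p ≤ q → q ≤ y →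
      |f' p - f' q| ≤ L * |x - y| ^ (α - 1) := by
    intro p q hp hq h1 h2 h3
    calc |f' p - f' q| ≤ L * |p - q| ^ (α - 1) := hHolder p hp q hq
      _ ≤ L * |x - y| ^ (α - 1) := by
          apply mul_le_mul_of_nonneg_left _ hL
          apply Real.rpow_le_rpow (abs_nonneg _) _ (by linarith)
          rw [habs, abs_of_nonpos (by linarith)]
          linarith
  have hzero : σx = σy → |σx - σy| ≤ L * |x - y| ^ (α - 1) := by
    intro h; rw [h, sub_self, abs_zero]; exact hRHS
  rcases Gx with ⟨hgx, hσx⟩ | ⟨u, v, ch, hux, hxv, hσx⟩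
  · rcases Gy with ⟨hgy, hσy⟩ | ⟨u', v', ch', hu'y, hyv', hσy⟩
    · -- contact / contact
      rw [hσx, hσy]
      exact hstep x y hx hy (le_refl x) hxy.le (le_refl y)
    · -- contact x / chord y
      have hu'I : u' ∈ Icc (0:ℝ) 1 := ⟨ch'.1, le_trans ch'.2.1.le ch'.2.2.1⟩
      rcases lt_or_ge x u' with hxu' | hu'x
      · -- x strictly left of the chord
        have h0u' : 0 < u' := lt_of_le_of_lt hx.1 hxu'
        have hu'1 : u' < 1 := lt_of_lt_of_le ch'.2.1 ch'.2.2.1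
        have hfu' := touching_slope hα1 hT ch' ⟨le_refl u', ch'.2.1.le⟩ ch'.gu h0u' hu'1
        rw [hσx, hσy, ← hfu']
        exact hstep x u' hx hu'I (le_refl x) hxu'.le hu'y
      · -- x inside the chord
        rcases eq_or_lt_of_le hu'x with heq | hlt
        · -- x = u'
          rcases eq_or_lt_of_le hx.1 with hx0 | hx0
          · -- x = 0, so u' = 0 : use uniqueness of the derivative
            have hD : HasDerivWithinAt g ((f v' - f u') / (v' - u')) (Icc (0:ℝ) 1) x :=
              chord_hasDeriv ch' hx hu'x (by linarith) (Or.inr (by rw [heq, ← hx0]))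
                (Or.inl (by linarith))
            apply hzero
            rw [hσy]
            exact deriv_unique hx Dx hD
          · -- 0 < x = u' < 1 : touching slope at x
            have hfx := touching_slope hα1 hT ch' ⟨hu'x, by linarith⟩ hgx hx0
              (lt_of_lt_of_le hxy hy.2)
            apply hzero
            rw [hσx, hσy, hfx]
        · -- u' < x : x interior to chord, uniqueness
          have hD : HasDerivWithinAt g ((f v' - f u') / (v' - u')) (Icc (0:ℝ) 1) x :=
            chord_hasDeriv ch' hx hu'x (by linarith) (Or.inl hlt) (Or.inl (by linarith))
          apply hzero
          rw [hσy]
          exact deriv_unique hx Dx hD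
  · rcases Gy with ⟨hgy, hσy⟩ | ⟨u', v', ch', hu'y, hyv', hσy⟩
    · -- chord x / contact y
      have hvI : v ∈ Icc (0:ℝ) 1 := ⟨le_trans ch.1 ch.2.1.le, ch.2.2.1⟩
      rcases lt_or_ge v y with hvy | hyv
      · have h0v : 0 < v := lt_of_le_of_lt ch.1 ch.2.1
        have hv1 : v < 1 := lt_of_lt_of_le hvy hy.2
        have hfv := touching_slope hα1 hT ch ⟨ch.2.1.le, le_refl v⟩ ch.gv h0v hv1
        rw [hσx, hσy, ← hfv]
        exact hstep v y hvI hy hxv hvy.le (le_refl y)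
      · rcases eq_or_lt_of_le hyv with heq | hlt
        · -- y = v
          rcases eq_or_lt_of_le hy.2 with hy1 | hy1
          · -- y = 1, v = 1
            have hD : HasDerivWithinAt g ((f v - f u) / (v - u)) (Icc (0:ℝ) 1) y :=
              chord_hasDeriv ch hy (by linarith) hyv (Or.inl (by linarith))
                (Or.inr (by rw [← heq, hy1]))
            apply hzero
            rw [hσx]
            exact deriv_unique hy hD Dy
          · have hfy := touching_slope hα1 hT ch ⟨by linarith, hyv⟩ hgy
              (lt_of_le_of_lt hx.1 hxy) hy1
            apply hzero
            rw [hσx, hσy, hfy]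
        · -- y < v : y interior to chord, uniqueness
          have hD : HasDerivWithinAt g ((f v - f u) / (v - u)) (Icc (0:ℝ) 1) y :=
            chord_hasDeriv ch hy (by linarith) hyv (Or.inl (by linarith)) (Or.inl hlt)
          apply hzero
          rw [hσx]
          exact deriv_unique hy hD Dy
    · -- chord x / chord y
      have hvI : v ∈ Icc (0:ℝ) 1 := ⟨le_trans ch.1 ch.2.1.le, ch.2.2.1⟩
      have hu'I : u' ∈ Icc (0:ℝ) 1 := ⟨ch'.1, le_trans ch'.2.1.le ch'.2.2.1⟩
      rcases lt_or_ge v u' with hvu' | hu'v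
      · -- disjoint chords
        have h0v : 0 < v := lt_of_le_of_lt ch.1 ch.2.1
        have hv1 : v < 1 := lt_of_lt_of_le (lt_of_lt_of_le hvu' (le_trans ch'.2.1.le ch'.2.2.1)) (le_refl 1)
        have hfv := touching_slope hα1 hT ch ⟨ch.2.1.le, le_refl v⟩ ch.gv h0v
          (lt_of_lt_of_le hvu' (by linarith [ch'.2.1, ch'.2.2.1] : u' ≤ 1))
        have h0u' : 0 < u' := lt_trans h0v hvu'
        have hu'1 : u' < 1 := lt_of_lt_of_le ch'.2.1 ch'.2.2.1
        have hfu' := touching_slope hα1 hT ch' ⟨le_refl u', ch'.2.1.le⟩ ch'.gu h0u' hu'1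
        rw [hσx, hσy, ← hfv, ← hfu']
        exact hstep v u' hvI hu'I hxv hvu'.le hu'y
      · -- overlapping chords
        set a : ℝ := max u u' with ha
        set b : ℝ := min v v' with hb
        have hab : a ≤ b := by
          apply max_le
          · exact le_min ch.2.1.le (by linarith)
          · exact le_min hu'v (le_trans hu'y hyv')
        have haUV : a ∈ Icc u v := ⟨le_max_left _ _, le_trans hab (min_le_left _ _)⟩
        have hbUV : b ∈ Icc u v := ⟨le_trans (le_max_left _ _) hab, min_le_left _ _⟩
        have haUV' : a ∈ Icc u' v' := ⟨le_max_right _ _, le_trans hab (min_le_right _ _)⟩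
        have hbUV' : b ∈ Icc u' v' := ⟨le_trans (le_max_right _ _) hab, min_le_right _ _⟩
        rcases eq_or_lt_of_le hab with heq | hlt
        · -- single point overlap c
          have hcc : g a = f a := by
            rcases max_choice u u' with h | h
            · rw [ha, h]; exact ch.gu
            · rw [ha, h]; exact ch'.gu
          have hc0 : 0 < a := by
            rcases min_choice v v' with h | h
            · rw [heq, hb, h]; exact lt_of_le_of_lt ch.1 ch.2.1
            · rw [heq, hb, h]; exact lt_of_le_of_lt ch'.1 ch'.2.1
          have hc1 : a < 1 := by
            rcases max_choice u u' with h | h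
            · rw [ha, h]; exact lt_of_lt_of_le ch.2.1 ch.2.2.1
            · rw [ha, h]; exact lt_of_lt_of_le ch'.2.1 ch'.2.2.1
          have h1 := touching_slope hα1 hT ch haUV hcc hc0 hc1
          have h2 := touching_slope hα1 hT ch' haUV' hcc hc0 hc1
          apply hzero
          rw [hσx, hσy, ← h1, ← h2]
        · -- interval overlap : equal slopes
          have e1 := ch.2.2.2.1 a haUV
          have e2 := ch.2.2.2.1 b hbUV
          have e3 := ch'.2.2.2.1 a haUV'
          have e4 := ch'.2.2.2.1 b hbUV'
          have hslope : (f v - f u) / (v - u) * (b - a) = (f v' - f u') / (v' - u') * (b - a) := by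
            have q1 : g b - g a = (f v - f u) / (v - u) * (b - a) := by
              rw [e1, e2]; ring
            have q2 : g b - g a = (f v' - f u') / (v' - u') * (b - a) := by
              rw [e3, e4]; ring
            rw [← q1, q2]
          have : (f v - f u) / (v - u) = (f v' - f u') / (v' - u') :=
            mul_right_cancel₀ (ne_of_gt (by linarith : (0:ℝ) < b - a)) hslope
          apply hzero
          rw [hσx, hσy, this]

end P

end

end CMH

open Set

theorem convex_minorant_holder_derivative (α L : ℝ) (hα1 : 1 < α) (hα2 : α < 2)
    (f f' : ℝ → ℝ)
    (hderiv : ∀ x ∈ Icc (0:ℝ) 1, HasDerivWithinAt f (f' x) (Icc 0 1) x)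
    (hHolder : ∀ x ∈ Icc (0:ℝ) 1, ∀ y ∈ Icc (0:ℝ) 1,
      |f' x - f' y| ≤ L * |x - y| ^ (α - 1))
    (g : ℝ → ℝ)
    (hg : ∀ x ∈ Icc (0:ℝ) 1,
      g x = sInf {y : ℝ | ((x, y) : ℝ × ℝ) ∈
        convexHull ℝ {p : ℝ × ℝ | p.1 ∈ Icc (0:ℝ) 1 ∧ f p.1 ≤ p.2}}) :
    ∃ g' : ℝ → ℝ,
      (∀ x ∈ Icc (0:ℝ) 1, HasDerivWithinAt g (g' x) (Icc 0 1) x) ∧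
      ∀ x ∈ Icc (0:ℝ) 1, ∀ y ∈ Icc (0:ℝ) 1,
        |g' x - g' y| ≤ L * |x - y| ^ (α - 1) := by
  classical
  have hL : 0 ≤ L := CMH.hL_nonneg hα1 hHolder
  have hT := CMH.taylor_bound hα1 hderiv hHolder hL
  have hgfib : ∀ x ∈ Icc (0:ℝ) 1, g x = sInf (CMH.fib f x) := hg
  have hgA : ∀ x ∈ Icc (0:ℝ) 1, g x ≤ f x := CMH.g_le_f hα1 hL hT hgfib
  have hgC : ∀ c μ : ℝ, (∀ t ∈ Icc (0:ℝ) 1, c + μ * t ≤ f t) →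
      ∀ x ∈ Icc (0:ℝ) 1, c + μ * x ≤ g x := fun c μ h => CMH.line_le_g hgfib h
  have hgch : ∀ u v : ℝ, u ∈ Icc (0:ℝ) 1 → v ∈ Icc (0:ℝ) 1 → u < v →
      ∀ t ∈ Icc u v, g t ≤ f u + (f v - f u) / (v - u) * (t - u) :=
    fun u v hu hv huv => CMH.g_le_chord hα1 hL hT hgfib hu hv huv
  have hfc : ContinuousOn f (Icc (0:ℝ) 1) :=
    fun z hz => (hderiv z hz).continuousWithinAt
  have hdich : ∀ t ∈ Ioo (0:ℝ) 1, g t = f t ∨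
      ∃ u v, CMH.IsChord f g u v ∧ u < t ∧ t < v :=
    fun t ht => CMH.structure_dichotomy hα1 hL hT hHolder hfc hgA hgC hgch ht
  have h0I : (0:ℝ) ∈ Icc (0:ℝ) 1 := by constructor <;> norm_num
  have h1I : (1:ℝ) ∈ Icc (0:ℝ) 1 := by constructor <;> norm_num
  have hg0 : g 0 = f 0 := by
    have h2 := hgC (f 0) (f' 0 - L) (CMH.lower_line hα1 hL hT) 0 h0I
    have h3 := hgA 0 h0I
    have : f 0 + (f' 0 - L) * 0 ≤ g 0 := h2
    apply le_antisymm h3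
    linarith
  have hg1 : g 1 = f 1 := by
    have h2 := hgC (f 1 - (f' 1 + L)) (f' 1 + L) (CMH.upper_line hα1 hL hT) 1 h1I
    have h3 := hgA 1 h1I
    apply le_antisymm h3
    linarith
  have hR := CMH.exists_good_deriv hα1 hL hT hHolder hgA hg0 hg1 hdich
  choose! σ hD hG using hR
  refine ⟨σ, hD, ?_⟩
  intro x hx y hy
  rcases lt_trichotomy x y with h | h | h
  · exact CMH.holder_main hα1 hL hT hHolder hx hy h (hD x hx) (hD y hy) (hG x hx) (hG y hy)
  · subst h
    rw [sub_self, abs_zero, sub_self, abs_zero,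
      Real.zero_rpow (by intro hc; linarith [sub_eq_zero.1 hc] : α - 1 ≠ 0), mul_zero]
  · rw [abs_sub_comm, abs_sub_comm x y]
    exact CMH.holder_main hα1 hL hT hHolder hy hx h (hD y hy) (hD x hx) (hG y hy) (hG x hx)
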